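/- Fix α ∈ (0,1) and let f(w) = |w|^{(2-α)/(1-α)} on ℝ. Then for all w, w' ∈ ℝ, |f'(w') - f'(w)| ≤ ((2-α)^{1-α}/(1-α)^{2-α})·|w'-w|·max_{θ∈[0,1]} |f'(θw' + (1-θ)w)|^α. In particular f belongs to the α-symmetric generalized-smooth class L*_sym(α) with L₀ arbitrary positive and L₁ = (2-α)^{1-α}/(1-α)^{2-α}. -/

import Mathlib

lemma hasDerivAt_mul_abs_rpow {q : ℝ} (hq : 0 < q) (x : ℝ) :
    HasDerivAt (fun y : ℝ => y * |y| ^ q) ((q + 1) * |x| ^ q) x := by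
  rcases lt_trichotomy x 0 with hx | hx | hx
  · have hne : (-x : ℝ) ≠ 0 := ne_of_gt (neg_pos.2 hx)
    have h1 : HasDerivAt (fun z : ℝ => z ^ (q + 1)) ((q + 1) * (-x) ^ q) (-x) := by
      have := Real.hasDerivAt_rpow_const (x := -x) (p := q + 1) (Or.inl hne)
      simpa using this
    have h2 : HasDerivAt (fun y : ℝ => -((-y) ^ (q + 1))) ((q + 1) * (-x) ^ q) x := by
      have h3 := (h1.comp x (hasDerivAt_neg x)).neg
      simpa [mul_comm, Function.comp_def, Pi.neg_def] using h3
    have heq : (fun y : ℝ => y * |y| ^ q) =ᶠ[nhds x] fun y : ℝ => -((-y) ^ (q + 1)) := by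
      filter_upwards [Iio_mem_nhds hx] with y (hy : y < 0)
      have hy' : (0:ℝ) < -y := neg_pos.2 hy
      rw [abs_of_neg hy, Real.rpow_add_one (ne_of_gt hy'), ]
      ring
    have := h2.congr_of_eventuallyEq heq
    simpa [abs_of_neg hx] using this
  · subst hx
    have h0 : ((q:ℝ) + 1) * |(0:ℝ)| ^ q = 0 := by
      simp [Real.zero_rpow (ne_of_gt hq)]
    rw [h0, hasDerivAt_iff_tendsto_slope]
    have heq : ∀ y : ℝ, y ≠ 0 → slope (fun y : ℝ => y * |y| ^ q) 0 y = |y| ^ q := by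
      intro y hy
      simp [slope_def_field, hy, mul_comm, mul_div_assoc, div_self hy]
    have htend : Filter.Tendsto (fun y : ℝ => |y| ^ q) (nhds 0) (nhds 0) := by
      have : Filter.Tendsto (fun y : ℝ => |y|) (nhds 0) (nhds 0) := by
        simpa using continuous_abs.tendsto (0:ℝ)
      have := this.rpow_const (p := q) (Or.inr hq.le)
      simpa [Real.zero_rpow (ne_of_gt hq)] using this
    refine Filter.Tendsto.congr' ?_ (htend.mono_left nhdsWithin_le_nhds)
    filter_upwards [self_mem_nhdsWithin] with y hy
    exact (heq y hy).symm
  · have hne : x ≠ 0 := ne_of_gt hx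
    have h1 : HasDerivAt (fun z : ℝ => z ^ (q + 1)) ((q + 1) * x ^ q) x := by
      have := Real.hasDerivAt_rpow_const (x := x) (p := q + 1) (Or.inl hne)
      simpa using this
    have heq : (fun y : ℝ => y * |y| ^ q) =ᶠ[nhds x] fun y : ℝ => y ^ (q + 1) := by
      filter_upwards [Ioi_mem_nhds hx] with y (hy : 0 < y)
      rw [abs_of_pos hy, Real.rpow_add_one (ne_of_gt hy)]
      ring
    have := h1.congr_of_eventuallyEq heq
    simpa [abs_of_pos hx] using this

theorem poly_in_sym_class (α : ℝ) (hα : α ∈ Set.Ioo (0:ℝ) 1)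
    (f' : ℝ → ℝ)
    (hf' : ∀ w, f' w = ((2 - α) / (1 - α)) * |w| ^ ((1:ℝ) / (1 - α)) * Real.sign w) :
    (∀ w w' : ℝ, |f' w' - f' w| ≤
      ((2 - α) ^ (1 - α) / (1 - α) ^ (2 - α)) * |w' - w| *
        sSup ((fun θ : ℝ => |f' (θ * w' + (1 - θ) * w)| ^ α) '' Set.Icc 0 1)) ∧
    (∀ L₀ : ℝ, 0 < L₀ → ∀ w w' : ℝ, |f' w' - f' w| ≤
      (L₀ + ((2 - α) ^ (1 - α) / (1 - α) ^ (2 - α)) *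
        sSup ((fun θ : ℝ => |f' (θ * w' + (1 - θ) * w)| ^ α) '' Set.Icc 0 1)) * |w' - w|) := by
  obtain ⟨hα0, hα1⟩ := hα
  have h1α : (0:ℝ) < 1 - α := by linarith
  have h2α : (0:ℝ) < 2 - α := by linarith
  set c : ℝ := (2 - α) / (1 - α) with hc
  set K : ℝ := (2 - α) ^ (1 - α) / (1 - α) ^ (2 - α) with hK
  have hcpos : 0 < c := div_pos h2α h1α
  set q : ℝ := α / (1 - α) with hqdef
  have hq : 0 < q := div_pos hα0 h1α
  have hp : (1:ℝ) / (1 - α) = q + 1 := by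
    rw [hqdef]; field_simp; ring
  -- rewrite f'
  have hf2 : ∀ x, f' x = c * (x * |x| ^ q) := by
    intro x
    rw [hf' x, hp]
    rcases lt_trichotomy x 0 with hx | hx | hx
    · rw [Real.sign_of_neg hx, abs_of_neg hx,
        Real.rpow_add_one (ne_of_gt (neg_pos.2 hx))]
      ring
    · subst hx; simp
    · rw [Real.sign_of_pos hx, abs_of_pos hx,
        Real.rpow_add_one (ne_of_gt hx)]
      ring
  -- |f' x| ^ α = c^α * |x|^q
  have hqα : (q + 1) * α = q := by
    rw [hqdef]; field_simp; ring
  have habs : ∀ x, |f' x| ^ α = c ^ α * |x| ^ q := by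
    intro x
    have h1 : |f' x| = c * |x| ^ (q + 1) := by
      by_cases hx : x = 0
      · subst hx
        simp [hf2, Real.zero_rpow (by positivity : q + 1 ≠ 0)]
      · rw [hf2 x, abs_mul, abs_of_pos hcpos, abs_mul,
          abs_of_nonneg (Real.rpow_nonneg (abs_nonneg x) q),
          Real.rpow_add_one (abs_ne_zero.2 hx)]
        ring
    rw [h1, Real.mul_rpow hcpos.le (Real.rpow_nonneg (abs_nonneg x) _),
      ← Real.rpow_mul (abs_nonneg x), hqα]
  have hKpos : 0 < K := div_pos (Real.rpow_pos_of_pos h2α _) (Real.rpow_pos_of_pos h1α _)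
  have hKc : K * c ^ α = c * (q + 1) := by
    rw [hK, hc, Real.div_rpow h2α.le h1α.le, div_mul_div_comm,
      ← Real.rpow_add h2α, ← Real.rpow_add h1α]
    have e1 : (1 - α) + α = 1 := by ring
    have e2 : (2 - α) + α = 2 := by ring
    have e3 : (1 - α) ^ ((2:ℝ)) = (1 - α) ^ (2:ℕ) := by
      rw [← Real.rpow_natCast]; norm_num
    rw [e1, e2, Real.rpow_one, e3, hqdef]
    have h3 : α / (1 - α) + 1 = 1 / (1 - α) := by field_simp; ring
    rw [h3, div_mul_div_comm, mul_one, sq]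
  have key : ∀ w w' : ℝ,
      |f' w' - f' w| ≤ K * |w' - w| *
        sSup ((fun θ : ℝ => |f' (θ * w' + (1 - θ) * w)| ^ α) '' Set.Icc 0 1)
      ∧ 0 ≤ sSup ((fun θ : ℝ => |f' (θ * w' + (1 - θ) * w)| ^ α) '' Set.Icc 0 1) := by
    intro w w'
    set M : ℝ := max |w| |w'| with hM
    have hM0 : 0 ≤ M := le_max_of_le_left (abs_nonneg w)
    set S := ((fun θ : ℝ => |f' (θ * w' + (1 - θ) * w)| ^ α) '' Set.Icc 0 1) with hS
    have hbdd : BddAbove S := by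
      refine ⟨c ^ α * M ^ q, ?_⟩
      rintro _ ⟨θ, ⟨hθ0, hθ1⟩, rfl⟩
      have habs_pt : |θ * w' + (1 - θ) * w| ≤ M := by
        calc |θ * w' + (1 - θ) * w| ≤ |θ * w'| + |(1 - θ) * w| := abs_add_le _ _
          _ = θ * |w'| + (1 - θ) * |w| := by
              rw [abs_mul, abs_mul, abs_of_nonneg hθ0, abs_of_nonneg (sub_nonneg.2 hθ1)]
          _ ≤ θ * M + (1 - θ) * M := by
              have h1 : |w'| ≤ M := le_max_right _ _
              have h2 : |w| ≤ M := le_max_left _ _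
              nlinarith
          _ = M := by ring
      show |f' (θ * w' + (1 - θ) * w)| ^ α ≤ c ^ α * M ^ q
      rw [habs]
      exact mul_le_mul_of_nonneg_left
        (Real.rpow_le_rpow (abs_nonneg _) habs_pt hq.le)
        (Real.rpow_nonneg hcpos.le α)
    have hmem1 : c ^ α * |w'| ^ q ∈ S := ⟨1, by norm_num, by norm_num [habs]⟩
    have hmem0 : c ^ α * |w| ^ q ∈ S := ⟨0, by norm_num, by norm_num [habs]⟩
    have hsup_ge : c ^ α * M ^ q ≤ sSup S := by
      rcases max_cases |w| |w'| with ⟨h1, _⟩ | ⟨h1, _⟩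
      · rw [hM, h1]; exact le_csSup hbdd hmem0
      · rw [hM, h1]; exact le_csSup hbdd hmem1
    have hsup0 : 0 ≤ sSup S := le_trans (by positivity) hsup_ge
    have hf'eq : f' = fun y => c * (y * |y| ^ q) := funext hf2
    have hmvt : |f' w' - f' w| ≤ c * ((q + 1) * M ^ q) * |w' - w| := by
      have hder : ∀ x ∈ Set.uIcc w w',
          HasDerivWithinAt f' (c * ((q + 1) * |x| ^ q)) (Set.uIcc w w') x := by
        intro x _
        rw [hf'eq]
        exact ((hasDerivAt_mul_abs_rpow hq x).const_mul c).hasDerivWithinAt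
      have hbound : ∀ x ∈ Set.uIcc w w',
          ‖c * ((q + 1) * |x| ^ q)‖ ≤ c * ((q + 1) * M ^ q) := by
        intro x hx
        have hxM : |x| ≤ M := by
          rcases Set.mem_uIcc.1 hx with ⟨h1, h2⟩ | ⟨h1, h2⟩
          · exact abs_le_max_abs_abs h1 h2
          · rw [hM, max_comm]; exact abs_le_max_abs_abs h1 h2
        have hr : |x| ^ q ≤ M ^ q := Real.rpow_le_rpow (abs_nonneg x) hxM hq.le
        rw [Real.norm_eq_abs, abs_of_nonneg (by positivity)]
        have hq1 : (0:ℝ) ≤ q + 1 := by linarith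
        exact mul_le_mul_of_nonneg_left (mul_le_mul_of_nonneg_left hr hq1) hcpos.le
      have := (convex_uIcc w w').norm_image_sub_le_of_norm_hasDerivWithin_le hder hbound
        (Set.left_mem_uIcc) (Set.right_mem_uIcc)
      simpa [Real.norm_eq_abs] using this
    refine ⟨?_, hsup0⟩
    calc |f' w' - f' w| ≤ c * ((q + 1) * M ^ q) * |w' - w| := hmvt
      _ = K * |w' - w| * (c ^ α * M ^ q) := by rw [show c * ((q+1) * M ^ q) = (K * c ^ α) * M ^ q from by rw [hKc]; ring]; ring
      _ ≤ K * |w' - w| * sSup S :=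
          mul_le_mul_of_nonneg_left hsup_ge (by positivity)
  refine ⟨fun w w' => (key w w').1, fun L₀ hL₀ w w' => ?_⟩
  obtain ⟨h1, h2⟩ := key w w'
  refine h1.trans ?_
  have hd : 0 ≤ |w' - w| := abs_nonneg _
  nlinarith [mul_nonneg hL₀.le hd, mul_nonneg (mul_nonneg hKpos.le h2) hd]
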